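/- Fix k ∈ ℝ³∖{0}, let A_{α,k}(x) be the vector potential operators and H^{ph}_k = ħ c |k| (a_H† a_H + a_V† a_V) the free photon Hamiltonian at wave vector k. Then for every α ∈ {1,2,3}, every x ∈ ℝ⁴, and every v in the span of the basis vectors |m,n⟩, Heisenberg's equation of motion holds: i ħ c ∂₀ (A_{α,k}(x) v) = [A_{α,k}(x), H^{ph}_k] v. -/

import Mathlib

/-- `k_μ x^μ = |k| x⁰ − k·𝐱` (massless dispersion relation). -/
noncomputable def minkDot0 (k : EuclideanSpace ℝ (Fin 3))
    (x : ℝ × EuclideanSpace ℝ (Fin 3)) : ℝ :=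
  ‖k‖ * x.1 - (inner ℝ k x.2 : ℝ)

/-- Normalization factor `N₀(k) = √((2π)³ · 2|k| · ℓ)`. -/
noncomputable def N₀ (ℓ : ℝ) (k : EuclideanSpace ℝ (Fin 3)) : ℝ :=
  Real.sqrt ((2 * Real.pi) ^ 3 * (2 * ‖k‖) * ℓ)

/-- Annihilation operator of the horizontal mode on the two-mode oscillator space. -/
noncomputable def aH (v : ℕ × ℕ → ℂ) : ℕ × ℕ → ℂ :=
  fun p => ((Real.sqrt ((p.1 : ℝ) + 1) : ℝ) : ℂ) * v (p.1 + 1, p.2)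

/-- Creation operator of the horizontal mode. -/
noncomputable def aHdag (v : ℕ × ℕ → ℂ) : ℕ × ℕ → ℂ :=
  fun p => if p.1 = 0 then 0 else ((Real.sqrt (p.1 : ℝ) : ℝ) : ℂ) * v (p.1 - 1, p.2)

/-- Annihilation operator of the vertical mode. -/
noncomputable def aV (v : ℕ × ℕ → ℂ) : ℕ × ℕ → ℂ :=
  fun p => ((Real.sqrt ((p.2 : ℝ) + 1) : ℝ) : ℂ) * v (p.1, p.2 + 1)

/-- Creation operator of the vertical mode. -/
noncomputable def aVdag (v : ℕ × ℕ → ℂ) : ℕ × ℕ → ℂ :=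
  fun p => if p.2 = 0 then 0 else ((Real.sqrt (p.2 : ℝ) : ℝ) : ℂ) * v (p.1, p.2 - 1)

/-- The vector potential operator `A_{α,k}(x)` applied to `v`. -/
noncomputable def Acomp (lam ℓ : ℝ) (k : EuclideanSpace ℝ (Fin 3))
    (εH εV : Fin 3 → ℝ) (α : Fin 3) (x : ℝ × EuclideanSpace ℝ (Fin 3))
    (v : ℕ × ℕ → ℂ) : ℕ × ℕ → ℂ :=
  fun p => ((lam / (2 * N₀ ℓ k) : ℝ) : ℂ) *
    (((εH α : ℝ) : ℂ) *
        (Complex.exp (-Complex.I * (minkDot0 k x)) * aH v p +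
          Complex.exp (Complex.I * (minkDot0 k x)) * aHdag v p) +
      ((εV α : ℝ) : ℂ) *
        (Complex.exp (-Complex.I * (minkDot0 k x)) * aV v p +
          Complex.exp (Complex.I * (minkDot0 k x)) * aVdag v p))

/-- The free photon Hamiltonian `H^{ph}_k = ħc|k|(a_H† a_H + a_V† a_V)` applied to `v`. -/
noncomputable def Hph (hbar c : ℝ) (k : EuclideanSpace ℝ (Fin 3))
    (v : ℕ × ℕ → ℂ) : ℕ × ℕ → ℂ :=
  fun p => ((hbar * c * ‖k‖ : ℝ) : ℂ) * (aHdag (aH v) p + aVdag (aV v) p)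

lemma num_H (v : ℕ × ℕ → ℂ) (p : ℕ × ℕ) : aHdag (aH v) p = (p.1 : ℂ) * v p := by
  rcases p with ⟨m, n⟩
  cases m with
  | zero => simp [aHdag]
  | succ m =>
    simp only [aHdag, aH, Nat.succ_ne_zero, if_false, Nat.succ_sub_one]
    push_cast
    rw [← mul_assoc, ← Complex.ofReal_mul, Real.mul_self_sqrt (by positivity)]
    push_cast; ring

lemma num_V (v : ℕ × ℕ → ℂ) (p : ℕ × ℕ) : aVdag (aV v) p = (p.2 : ℂ) * v p := by
  rcases p with ⟨m, n⟩
  cases n with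
  | zero => simp [aVdag]
  | succ n =>
    simp only [aVdag, aV, Nat.succ_ne_zero, if_false, Nat.succ_sub_one]
    push_cast
    rw [← mul_assoc, ← Complex.ofReal_mul, Real.mul_self_sqrt (by positivity)]
    push_cast; ring


/-- Heisenberg's equation of motion
`iħc ∂₀ (A_{α,k}(x) v) = [A_{α,k}(x), H^{ph}_k] v` on the span of the basis vectors. -/
theorem stmt_13 (hbar lam c ℓ : ℝ) (hhbar : 0 < hbar) (hlam : 0 < lam) (hc : 0 < c)
    (hℓ : 0 < ℓ)
    (k : EuclideanSpace ℝ (Fin 3)) (hk : k ≠ 0)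
    (Ξ : Matrix (Fin 3) (Fin 3) ℝ)
    (hΞorth : Ξ * Ξ.transpose = 1) (hΞdet : Ξ.det = 1)
    (hΞk : Ξ.mulVec (fun i => k i) = fun i => if i = 2 then ‖k‖ else 0) :
    ∀ v : ℕ × ℕ → ℂ,
      v ∈ Submodule.span ℂ (Set.range fun q : ℕ × ℕ => (Pi.single q 1 : ℕ × ℕ → ℂ)) →
      ∀ (α : Fin 3) (x : ℝ × EuclideanSpace ℝ (Fin 3)) (p : ℕ × ℕ),
        Complex.I * (hbar : ℂ) * (c : ℂ) *
            fderiv ℝ (fun y => Acomp lam ℓ k (Ξ 0) (Ξ 1) α y v p) x (1, 0)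
          = Acomp lam ℓ k (Ξ 0) (Ξ 1) α x (Hph hbar c k v) p
            - Hph hbar c k (Acomp lam ℓ k (Ξ 0) (Ξ 1) α x v) p := by
  intro v _ α x p
  set L : (ℝ × EuclideanSpace ℝ (Fin 3)) →L[ℝ] ℂ := Complex.ofRealCLM.comp
      ((‖k‖ • ContinuousLinearMap.fst ℝ ℝ (EuclideanSpace ℝ (Fin 3))) -
        (innerSL ℝ k).comp (ContinuousLinearMap.snd ℝ ℝ (EuclideanSpace ℝ (Fin 3)))) with hLdef
  have hm : HasFDerivAt (fun y : ℝ × EuclideanSpace ℝ (Fin 3) => ((minkDot0 k y : ℝ) : ℂ)) L x := by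
    apply Complex.ofRealCLM.hasFDerivAt.comp
    exact ((hasFDerivAt_fst).const_mul ‖k‖).sub
      (((innerSL ℝ k).hasFDerivAt).comp x hasFDerivAt_snd)
  have hE1 : HasFDerivAt
      (fun y : ℝ × EuclideanSpace ℝ (Fin 3) => Complex.exp (-Complex.I * ((minkDot0 k y : ℝ) : ℂ)))
      (Complex.exp (-Complex.I * ((minkDot0 k x : ℝ) : ℂ)) • ((-Complex.I) • L)) x :=
    (hm.const_mul (-Complex.I)).cexp
  have hE2 : HasFDerivAt
      (fun y : ℝ × EuclideanSpace ℝ (Fin 3) => Complex.exp (Complex.I * ((minkDot0 k y : ℝ) : ℂ)))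
      (Complex.exp (Complex.I * ((minkDot0 k x : ℝ) : ℂ)) • (Complex.I • L)) x :=
    (hm.const_mul Complex.I).cexp
  have hD : HasFDerivAt (fun y => Acomp lam ℓ k (Ξ 0) (Ξ 1) α y v p)
      (((lam / (2 * N₀ ℓ k) : ℝ) : ℂ) •
        (((Ξ 0 α : ℝ) : ℂ) •
            (aH v p • (Complex.exp (-Complex.I * ((minkDot0 k x : ℝ) : ℂ)) • ((-Complex.I) • L)) +
             aHdag v p • (Complex.exp (Complex.I * ((minkDot0 k x : ℝ) : ℂ)) • (Complex.I • L))) +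
          ((Ξ 1 α : ℝ) : ℂ) •
            (aV v p • (Complex.exp (-Complex.I * ((minkDot0 k x : ℝ) : ℂ)) • ((-Complex.I) • L)) +
             aVdag v p • (Complex.exp (Complex.I * ((minkDot0 k x : ℝ) : ℂ)) • (Complex.I • L))))) x := by
    exact ((((hE1.mul_const (aH v p)).add (hE2.mul_const (aHdag v p))).const_mul _).add
      (((hE1.mul_const (aV v p)).add (hE2.mul_const (aVdag v p))).const_mul _)).const_mul _
  rw [hD.fderiv]
  have hL : L (1, 0) = (‖k‖ : ℂ) := by
    simp [hLdef, minkDot0]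
  simp only [ContinuousLinearMap.add_apply, ContinuousLinearMap.smul_apply, hL, smul_eq_mul]
  have hHw : ∀ (w : ℕ × ℕ → ℂ) (q : ℕ × ℕ),
      Hph hbar c k w q = ((hbar * c * ‖k‖ : ℝ) : ℂ) * ((q.1:ℂ) + (q.2:ℂ)) * w q := by
    intro w q
    simp only [Hph, num_H, num_V]
    ring
  have haH : aH (Hph hbar c k v) p
      = ((hbar * c * ‖k‖ : ℝ) : ℂ) * (((p.1:ℂ)+1) + (p.2:ℂ)) * aH v p := by
    simp only [aH]
    rw [hHw]
    push_cast; ring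
  have haV : aV (Hph hbar c k v) p
      = ((hbar * c * ‖k‖ : ℝ) : ℂ) * ((p.1:ℂ) + ((p.2:ℂ)+1)) * aV v p := by
    simp only [aV]
    rw [hHw]
    push_cast; ring
  have haHd : aHdag (Hph hbar c k v) p
      = ((hbar * c * ‖k‖ : ℝ) : ℂ) * (((p.1:ℂ)-1) + (p.2:ℂ)) * aHdag v p := by
    rcases p with ⟨m, n⟩
    cases m with
    | zero => simp [aHdag]
    | succ m =>
      simp only [aHdag, Nat.succ_ne_zero, if_false, Nat.succ_sub_one]
      rw [hHw]
      push_cast; ring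
  have haVd : aVdag (Hph hbar c k v) p
      = ((hbar * c * ‖k‖ : ℝ) : ℂ) * ((p.1:ℂ) + ((p.2:ℂ)-1)) * aVdag v p := by
    rcases p with ⟨m, n⟩
    cases n with
    | zero => simp [aVdag]
    | succ n =>
      simp only [aVdag, Nat.succ_ne_zero, if_false, Nat.succ_sub_one]
      rw [hHw]
      push_cast; ring
  simp only [Acomp]
  rw [haH, haV, haHd, haVd, hHw]
  simp only [Acomp]
  push_cast
  ring_nf
  simp only [Complex.I_sq]
  ring
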